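/- Let 𝓜 be a nonempty, convex, compact set of real symmetric positive semidefinite d×d matrices, and define V(M) = sup_{‖δ‖ ≤ 1} δᵀ M δ. Assume that every minimizer M* of V over 𝓜 has a simple largest eigenvalue (one-dimensional top eigenspace). Then the approximate universal adversarial direction game has a Nash equilibrium with a pure adversary strategy: there exist M* ∈ 𝓜 and δ* ∈ ℝ^d with ‖δ*‖ ≤ 1 such that (a) δᵀ M* δ ≤ δ*ᵀ M* δ* for every δ with ‖δ‖ ≤ 1, and (b) δ*ᵀ M* δ* ≤ δ*ᵀ M δ* for every M ∈ 𝓜. (Theorem 2, part 1, saddle-point form.) -/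

import Mathlib

open Matrix

namespace UADAux

variable {d : ℕ}

/-- The quadratic form of a matrix on Euclidean space. -/
def Q (M : Matrix (Fin d) (Fin d) ℝ) (δ : EuclideanSpace ℝ (Fin d)) : ℝ :=
  δ ⬝ᵥ M.mulVec δ

lemma contQ (M : Matrix (Fin d) (Fin d) ℝ) : Continuous (Q M) := by
  unfold Q
  simp only [dotProduct, mulVec]
  apply continuous_finset_sum
  intro i _
  exact ((continuous_apply i).comp (PiLp.continuous_ofLp 2 _)).mul
    (continuous_finset_sum _ fun j _ => continuous_const.mul
      ((continuous_apply j).comp (PiLp.continuous_ofLp 2 _)))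

lemma ball_eq : {δ : EuclideanSpace ℝ (Fin d) | ‖δ‖ ≤ 1} = Metric.closedBall 0 1 := by
  ext δ; simp [Metric.mem_closedBall, dist_zero_right]

lemma compact_ball : IsCompact {δ : EuclideanSpace ℝ (Fin d) | ‖δ‖ ≤ 1} := by
  rw [ball_eq]; exact isCompact_closedBall 0 1

lemma exists_max (M : Matrix (Fin d) (Fin d) ℝ) :
    ∃ δ : EuclideanSpace ℝ (Fin d), ‖δ‖ ≤ 1 ∧
      ∀ x : EuclideanSpace ℝ (Fin d), ‖x‖ ≤ 1 → Q M x ≤ Q M δ := by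
  obtain ⟨δ, hδ, hmax⟩ := compact_ball.exists_isMaxOn ⟨0, by simp⟩ (contQ M).continuousOn
  exact ⟨δ, hδ, fun x hx => hmax hx⟩

lemma isGreatest (M : Matrix (Fin d) (Fin d) ℝ) {δ : EuclideanSpace ℝ (Fin d)}
    (hδ : ‖δ‖ ≤ 1) (hmax : ∀ x : EuclideanSpace ℝ (Fin d), ‖x‖ ≤ 1 → Q M x ≤ Q M δ) :
    IsGreatest ((fun x : EuclideanSpace ℝ (Fin d) => x ⬝ᵥ M.mulVec x) ''
      {x : EuclideanSpace ℝ (Fin d) | ‖x‖ ≤ 1}) (Q M δ) := by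
  constructor
  · exact ⟨δ, hδ, rfl⟩
  · rintro _ ⟨x, hx, rfl⟩; exact hmax x hx

lemma coord_le {δ : EuclideanSpace ℝ (Fin d)} (h : ‖δ‖ ≤ 1) (i : Fin d) : |δ i| ≤ 1 := by
  have h1 : |δ i| ≤ ‖δ‖ := by
    rw [EuclideanSpace.norm_eq]
    have : |δ i| = Real.sqrt (‖δ i‖ ^ 2) := by
      rw [Real.sqrt_sq_eq_abs]; simp
    rw [this]
    apply Real.sqrt_le_sqrt
    exact Finset.single_le_sum (f := fun j => ‖δ j‖ ^ 2) (fun j _ => by positivity)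
      (Finset.mem_univ i)
  linarith

/-- The entrywise ℓ¹ size of a matrix. -/
def S (A : Matrix (Fin d) (Fin d) ℝ) : ℝ := ∑ i, ∑ j, |A i j|

lemma contS : Continuous (S (d := d)) := by
  unfold S
  apply continuous_finset_sum; intro i _
  apply continuous_finset_sum; intro j _
  exact (continuous_id.matrix_elem i j).abs

lemma abs_Q_le (A : Matrix (Fin d) (Fin d) ℝ) {δ : EuclideanSpace ℝ (Fin d)} (h : ‖δ‖ ≤ 1) :
    |Q A δ| ≤ S A := by
  unfold Q S
  simp only [dotProduct, mulVec]
  calc |∑ i, δ i * ∑ j, A i j * δ j| ≤ ∑ i, |δ i * ∑ j, A i j * δ j| :=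
        Finset.abs_sum_le_sum_abs _ _
    _ ≤ ∑ i, ∑ j, |A i j| := by
        apply Finset.sum_le_sum
        intro i _
        rw [abs_mul]
        calc |δ i| * |∑ j, A i j * δ j| ≤ 1 * ∑ j, |A i j| := by
              apply mul_le_mul (coord_le h i) ?_ (abs_nonneg _) zero_le_one
              calc |∑ j, A i j * δ j| ≤ ∑ j, |A i j * δ j| := Finset.abs_sum_le_sum_abs _ _
                _ ≤ ∑ j, |A i j| := by
                    apply Finset.sum_le_sum
                    intro j _
                    rw [abs_mul]
                    calc |A i j| * |δ j| ≤ |A i j| * 1 :=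
                          mul_le_mul_of_nonneg_left (coord_le h j) (abs_nonneg _)
                      _ = |A i j| := mul_one _
          _ = ∑ j, |A i j| := one_mul _

lemma Q_sub (M N : Matrix (Fin d) (Fin d) ℝ) (δ : EuclideanSpace ℝ (Fin d)) :
    Q M δ - Q N δ = Q (M - N) δ := by
  unfold Q
  rw [sub_mulVec, dotProduct_sub]

/-- `V M` is attained and is an upper bound. -/
lemma V_spec (V : Matrix (Fin d) (Fin d) ℝ → ℝ)
    (hV : ∀ M, V M = sSup ((fun δ : EuclideanSpace ℝ (Fin d) => δ ⬝ᵥ M.mulVec δ) ''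
        {δ : EuclideanSpace ℝ (Fin d) | ‖δ‖ ≤ 1})) (M : Matrix (Fin d) (Fin d) ℝ) :
    ∃ δ : EuclideanSpace ℝ (Fin d), ‖δ‖ ≤ 1 ∧ V M = Q M δ ∧
      ∀ x : EuclideanSpace ℝ (Fin d), ‖x‖ ≤ 1 → Q M x ≤ V M := by
  obtain ⟨δ, hδ, hmax⟩ := exists_max M
  have hg := isGreatest M hδ hmax
  have : V M = Q M δ := by rw [hV M]; exact hg.csSup_eq
  exact ⟨δ, hδ, this, fun x hx => this ▸ hmax x hx⟩

lemma V_sub_le (V : Matrix (Fin d) (Fin d) ℝ → ℝ)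
    (hV : ∀ M, V M = sSup ((fun δ : EuclideanSpace ℝ (Fin d) => δ ⬝ᵥ M.mulVec δ) ''
        {δ : EuclideanSpace ℝ (Fin d) | ‖δ‖ ≤ 1}))
    (M N : Matrix (Fin d) (Fin d) ℝ) : V M ≤ V N + S (M - N) := by
  obtain ⟨δ, hδ, hVM, _⟩ := V_spec V hV M
  obtain ⟨_, _, _, hub⟩ := V_spec V hV N
  have h1 : Q M δ - Q N δ ≤ S (M - N) := by
    rw [Q_sub]
    exact le_trans (le_abs_self _) (abs_Q_le _ hδ)
  have h2 := hub δ hδ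
  linarith [hVM ▸ h1]

lemma contV (V : Matrix (Fin d) (Fin d) ℝ → ℝ)
    (hV : ∀ M, V M = sSup ((fun δ : EuclideanSpace ℝ (Fin d) => δ ⬝ᵥ M.mulVec δ) ''
        {δ : EuclideanSpace ℝ (Fin d) | ‖δ‖ ≤ 1})) : Continuous V := by
  rw [continuous_iff_continuousAt]
  intro N
  have hb : ∀ M, ‖V M - V N‖ ≤ S (M - N) + S (N - M) := by
    intro M
    have h1 := V_sub_le V hV M N
    have h2 := V_sub_le V hV N M
    have hS1 : (0:ℝ) ≤ S (M - N) :=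
      Finset.sum_nonneg fun i _ => Finset.sum_nonneg fun j _ => abs_nonneg _
    have hS2 : (0:ℝ) ≤ S (N - M) :=
      Finset.sum_nonneg fun i _ => Finset.sum_nonneg fun j _ => abs_nonneg _
    rw [Real.norm_eq_abs, abs_le]
    constructor <;> linarith
  have hg : Filter.Tendsto (fun M => S (M - N) + S (N - M)) (nhds N) (nhds 0) := by
    have hcont : Continuous (fun M : Matrix (Fin d) (Fin d) ℝ => S (M - N) + S (N - M)) :=
      (contS.comp (continuous_id.sub continuous_const)).add
        (contS.comp (continuous_const.sub continuous_id))
    simpa [S] using hcont.tendsto N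
  have h0 := squeeze_zero_norm hb hg
  have h2 : Filter.Tendsto V (nhds N) (nhds (V N)) := by
    have := h0.add_const (V N)
    simpa using this
  exact h2

lemma inner_eq_dot (x y : EuclideanSpace ℝ (Fin d)) : (inner ℝ x y : ℝ) = x ⬝ᵥ y := by
  simp [PiLp.inner_apply, dotProduct, RCLike.inner_apply, conj_trivial, mul_comm]

lemma dot_symm (M : Matrix (Fin d) (Fin d) ℝ) (hM : M.IsHermitian)
    (x y : Fin d → ℝ) : x ⬝ᵥ M.mulVec y = (M.mulVec x) ⬝ᵥ y := by
  have hsym : Mᵀ = M := by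
    have := hM.eq
    rwa [conjTranspose_eq_transpose_of_trivial] at this
  rw [dotProduct_mulVec]
  nth_rewrite 1 [← hsym]
  rw [vecMul_transpose]

/-- A maximizer of the quadratic form on the unit ball, attaining a positive maximum,
is an eigenvector for that value. -/
lemma eig_of_max (M : Matrix (Fin d) (Fin d) ℝ) (hM : M.IsHermitian) {lam : ℝ}
    (hlam : 0 < lam)
    (hub : ∀ δ : EuclideanSpace ℝ (Fin d), ‖δ‖ ≤ 1 → Q M δ ≤ lam)
    {v : EuclideanSpace ℝ (Fin d)} (hv : ‖v‖ ≤ 1) (hQv : Q M v = lam) :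
    M.mulVec v = lam • v := by
  classical
  set b := hM.eigenvectorBasis with hb
  set μ := hM.eigenvalues with hμ
  set c : Fin d → ℝ := fun i => b.repr v i with hc
  have hbnorm : ∀ i, ‖(b i : EuclideanSpace ℝ (Fin d))‖ = 1 := fun i => b.orthonormal.1 i
  have hbdot : ∀ i, (b i : EuclideanSpace ℝ (Fin d)) ⬝ᵥ (b i : EuclideanSpace ℝ (Fin d)) = 1 := by
    intro i
    rw [← inner_eq_dot, real_inner_self_eq_norm_sq, hbnorm i, one_pow]
  have hMb : ∀ i, M.mulVec (b i) = μ i • (b i : Fin d → ℝ) := fun i =>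
    hM.mulVec_eigenvectorBasis i
  have hQb : ∀ i, Q M (b i) = μ i := by
    intro i
    unfold Q
    rw [hMb i, dotProduct_smul, smul_eq_mul, hbdot i, mul_one]
  have hμle : ∀ i, μ i ≤ lam := fun i => (hQb i) ▸ hub (b i) (le_of_eq (hbnorm i))
  have hrepr : ∀ i, b.repr (WithLp.toLp 2 (M.mulVec v)) i = μ i * c i := by
    intro i
    rw [b.repr_apply_apply, inner_eq_dot, WithLp.ofLp_toLp, dot_symm M hM, hMb i,
      smul_dotProduct, smul_eq_mul]
    congr 1
    show b i ⬝ᵥ v = b.repr v i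
    rw [b.repr_apply_apply, inner_eq_dot]
  have hQcoord : Q M v = ∑ i, μ i * c i ^ 2 := by
    unfold Q
    rw [← WithLp.ofLp_toLp (p := 2) (M *ᵥ v.ofLp), ← inner_eq_dot v (WithLp.toLp 2 (M.mulVec v)),
      ← b.repr.inner_map_map v (WithLp.toLp 2 (M.mulVec v)), inner_eq_dot]
    unfold dotProduct
    apply Finset.sum_congr rfl
    intro i _
    rw [hrepr i]
    ring
  have hsum : ∑ i, c i ^ 2 = ‖v‖ ^ 2 := by
    rw [← real_inner_self_eq_norm_sq, ← b.repr.inner_map_map v v, inner_eq_dot]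
    unfold dotProduct
    apply Finset.sum_congr rfl
    intro i _
    ring
  have hsumle : ∑ i, c i ^ 2 ≤ 1 := by
    rw [hsum]
    nlinarith [norm_nonneg v]
  have hkey : lam * (1 - ∑ i, c i ^ 2) + ∑ i, (lam - μ i) * c i ^ 2 = 0 := by
    have : ∑ i, (lam - μ i) * c i ^ 2 = lam * ∑ i, c i ^ 2 - ∑ i, μ i * c i ^ 2 := by
      rw [Finset.mul_sum, ← Finset.sum_sub_distrib]
      apply Finset.sum_congr rfl
      intro i _; ring
    rw [this, ← hQcoord, hQv]
    ring
  have hterm : ∀ i, 0 ≤ (lam - μ i) * c i ^ 2 := fun i =>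
    mul_nonneg (by linarith [hμle i]) (sq_nonneg _)
  have hsums : 0 ≤ ∑ i, (lam - μ i) * c i ^ 2 := Finset.sum_nonneg fun i _ => hterm i
  have h1 : 0 ≤ lam * (1 - ∑ i, c i ^ 2) := mul_nonneg hlam.le (by linarith)
  have hzero : ∀ i, (lam - μ i) * c i ^ 2 = 0 := by
    intro i
    have hall : ∑ i, (lam - μ i) * c i ^ 2 = 0 := by linarith
    exact (Finset.sum_eq_zero_iff_of_nonneg (fun i _ => hterm i)).mp hall i (Finset.mem_univ i)
  have hinj : Function.Injective b.repr := b.repr.injective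
  apply WithLp.toLp_injective (p := 2)
  rw [WithLp.toLp_smul, WithLp.toLp_ofLp]
  apply hinj
  ext i
  have hlin : b.repr (lam • v) i = lam * c i := by
    rw [_root_.map_smul]
    rfl
  rw [hrepr i, hlin]
  rcases mul_eq_zero.mp (hzero i) with h | h
  · have : μ i = lam := by linarith
    rw [this]
  · have : c i = 0 := sq_eq_zero_iff.mp h
    rw [this, mul_zero, mul_zero]

lemma smul_of_finrank_one {W : Submodule ℝ (Fin d → ℝ)} (hW : Module.finrank ℝ W = 1)
    {x y : Fin d → ℝ} (hx : x ∈ W) (hy : y ∈ W) (hx0 : x ≠ 0) : ∃ c : ℝ, y = c • x := by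
  have hx' : (⟨x, hx⟩ : W) ≠ 0 := fun h => hx0 (by simpa using congrArg Subtype.val h)
  obtain ⟨c, hc⟩ := (finrank_eq_one_iff_of_nonzero' (⟨x, hx⟩ : W) hx').mp hW ⟨y, hy⟩
  exact ⟨c, (congrArg Subtype.val hc).symm⟩

lemma Q_of_eq_smul {A : Matrix (Fin d) (Fin d) ℝ} {y x : EuclideanSpace ℝ (Fin d)} {c : ℝ}
    (h : (y : Fin d → ℝ) = c • (x : Fin d → ℝ)) : Q A y = c ^ 2 * Q A x := by
  have h2 := congrArg (fun z : Fin d → ℝ => z ⬝ᵥ A.mulVec z) h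
  simp only at h2
  unfold Q
  rw [h2, mulVec_smul, smul_dotProduct, dotProduct_smul]
  simp only [smul_eq_mul]
  ring

lemma Q_zero (A : Matrix (Fin d) (Fin d) ℝ) : Q A (0 : EuclideanSpace ℝ (Fin d)) = 0 := by
  unfold Q
  show (0 : Fin d → ℝ) ⬝ᵥ A.mulVec (0 : Fin d → ℝ) = 0
  rw [zero_dotProduct]

lemma Q_combo (t : ℝ) (A B : Matrix (Fin d) (Fin d) ℝ) (δ : EuclideanSpace ℝ (Fin d)) :
    Q ((1 - t) • A + t • B) δ = (1 - t) * Q A δ + t * Q B δ := by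
  unfold Q
  rw [add_mulVec, smul_mulVec, smul_mulVec, dotProduct_add,
    dotProduct_smul, dotProduct_smul]
  simp [smul_eq_mul]

end UADAux

open UADAux

theorem uad_game_pure_nash_of_simple_top_eigenvalue
    {d : ℕ} (𝓜 : Set (Matrix (Fin d) (Fin d) ℝ))
    (hne : 𝓜.Nonempty) (hconv : Convex ℝ 𝓜) (hcpt : IsCompact 𝓜)
    (hpsd : ∀ M ∈ 𝓜, M.PosSemidef)
    (V : Matrix (Fin d) (Fin d) ℝ → ℝ)
    (hV : ∀ M, V M =
      sSup ((fun δ : EuclideanSpace ℝ (Fin d) => δ ⬝ᵥ M.mulVec δ) ''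
        {δ : EuclideanSpace ℝ (Fin d) | ‖δ‖ ≤ 1}))
    (hsimple : ∀ Mstar ∈ 𝓜, (∀ M ∈ 𝓜, V Mstar ≤ V M) →
      Module.finrank ℝ (Module.End.eigenspace (Matrix.toLin' Mstar) (V Mstar)) = 1) :
    ∃ Mstar ∈ 𝓜, ∃ δstar : EuclideanSpace ℝ (Fin d), ‖δstar‖ ≤ 1 ∧
      (∀ δ : EuclideanSpace ℝ (Fin d), ‖δ‖ ≤ 1 →
        δ ⬝ᵥ Mstar.mulVec δ ≤ δstar ⬝ᵥ Mstar.mulVec δstar) ∧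
      (∀ M ∈ 𝓜, δstar ⬝ᵥ Mstar.mulVec δstar ≤ δstar ⬝ᵥ M.mulVec δstar) := by
  obtain ⟨Mstar, hMstar, hmin⟩ := hcpt.exists_isMinOn hne (contV V hV).continuousOn
  have hminle : ∀ M ∈ 𝓜, V Mstar ≤ V M := fun M hM => hmin hM
  obtain ⟨δm, hδm, hVeq, hub⟩ := V_spec V hV Mstar
  set lam := V Mstar with hlamdef
  -- lam is nonnegative
  have hlam0 : 0 ≤ lam := by
    have := hub 0 (by simp)
    rw [Q_zero] at this
    exact this
  by_cases hpos : 0 < lam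
  · -- positive top eigenvalue case
    refine ⟨Mstar, hMstar, δm, hδm, ?_, ?_⟩
    · intro δ hδ
      show Q Mstar δ ≤ Q Mstar δm
      rw [← hVeq]
      exact hub δ hδ
    · -- part (b)
      intro M hM
      by_contra hcon
      push_neg at hcon
      have hcon' : Q M δm < lam := by
        rw [hVeq]
        exact hcon
      -- setup
      have hHerm := (hpsd Mstar hMstar).1
      have hubQ : ∀ δ : EuclideanSpace ℝ (Fin d), ‖δ‖ ≤ 1 → Q Mstar δ ≤ lam := hub
      have hQδm : Q Mstar δm = lam := hVeq.symm
      obtain ⟨_, _, _, hubM⟩ := V_spec V hV M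
      set C : ℝ := max (V M) lam with hC
      have hCl : lam ≤ C := le_max_right _ _
      have hVMC : V M ≤ C := le_max_left _ _
      set D : ℝ := C - lam with hD
      have hD0 : 0 ≤ D := by simp [hD]; linarith
      have hCD : C = lam + D := by rw [hD]; ring
      clear_value C
      clear hC
      clear_value D
      clear hD
      -- the family of compact sets
      set K : ℕ → Set (EuclideanSpace ℝ (Fin d)) := fun n =>
        {δ | ‖δ‖ ≤ 1} ∩ {δ | lam ≤ Q M δ} ∩ {δ | lam - 1/((n:ℝ)+1) ≤ Q Mstar δ} with hK
      have hKclosed : ∀ n, IsClosed (K n) := by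
        intro n
        refine IsClosed.inter (IsClosed.inter ?_ ?_) ?_
        · rw [ball_eq]; exact Metric.isClosed_closedBall
        · exact isClosed_le continuous_const (contQ M)
        · exact isClosed_le continuous_const (contQ Mstar)
      have hKsub : ∀ n, K n ⊆ {δ : EuclideanSpace ℝ (Fin d) | ‖δ‖ ≤ 1} := fun n =>
        fun δ hδ => hδ.1.1
      have hKcpt : ∀ n, IsCompact (K n) := fun n =>
        IsCompact.of_isClosed_subset compact_ball (hKclosed n) (hKsub n)
      have hKanti : ∀ n, K (n+1) ⊆ K n := by
        intro n δ hδ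
        refine ⟨hδ.1, ?_⟩
        have h3 := hδ.2
        simp only [Set.mem_setOf_eq] at h3 ⊢
        have hh : (1:ℝ)/((n:ℝ)+1+1) ≤ 1/((n:ℝ)+1) :=
          one_div_le_one_div_of_le (by positivity) (by linarith)
        push_cast at h3
        linarith
      have hKne : ∀ n, (K n).Nonempty := by
        intro n
        set ε : ℝ := 1/((n:ℝ)+1) with hε
        have hε0 : 0 < ε := by positivity
        have hε1 : ε ≤ 1 := by
          rw [hε]
          rw [div_le_one (by positivity)]
          simp
        clear_value ε
        have hs0 : (0:ℝ) < ε + D + 1 := by linarith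
        obtain ⟨t, ht0, ht1, hts'⟩ : ∃ t : ℝ, 0 < t ∧ t < 1 ∧ t * ε + t * D + t = ε := by
          refine ⟨ε / (ε + D + 1), div_pos hε0 hs0, ?_, ?_⟩
          · rw [div_lt_one hs0]; linarith
          · have hne' : (ε + D + 1) ≠ 0 := hs0.ne'
            field_simp
        -- the convex combination
        set Mt := (1 - t) • Mstar + t • M with hMt
        have hMtmem : Mt ∈ 𝓜 := hconv hMstar hM (by linarith) ht0.le (by ring)
        obtain ⟨δt, hδt, hVt, _⟩ := V_spec V hV Mt
        have hge : lam ≤ V Mt := hminle Mt hMtmem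
        have hcombo : Q Mt δt = (1 - t) * Q Mstar δt + t * Q M δt := Q_combo t Mstar M δt
        set a : ℝ := Q Mstar δt with ha
        set b : ℝ := Q M δt with hbb
        have halam : a ≤ lam := hubQ δt hδt
        have hbC : b ≤ C := le_trans (hubM δt hδt) hVMC
        have h1 : lam ≤ (1 - t) * a + t * b := by
          rw [← hcombo, ← hVt]
          exact hge
        -- b ≥ lam
        have hb' : lam ≤ b := by
          have key : t * lam ≤ t * b := by nlinarith
          exact le_of_mul_le_mul_left key ht0
        -- a ≥ lam - ε
        have ha' : lam - ε ≤ a := by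
          have key : (1 - t) * (lam - ε) ≤ (1 - t) * a := by nlinarith
          exact le_of_mul_le_mul_left key (by linarith)
        refine ⟨δt, ⟨hδt, hb'⟩, ?_⟩
        show lam - 1/((n:ℝ)+1) ≤ Q Mstar δt
        rw [← hε]
        exact ha'
      -- intersect
      obtain ⟨δ0, hδ0mem⟩ := IsCompact.nonempty_iInter_of_sequence_nonempty_isCompact_isClosed
        K hKanti hKne (hKcpt 0) hKclosed
      simp only [Set.mem_iInter] at hδ0mem
      have hδ0 : ‖δ0‖ ≤ 1 := (hδ0mem 0).1.1
      have hQM0 : lam ≤ Q M δ0 := (hδ0mem 0).1.2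
      have hQMs0 : Q Mstar δ0 = lam := by
        have hle : Q Mstar δ0 ≤ lam := hubQ δ0 hδ0
        have hge' : lam ≤ Q Mstar δ0 := by
          have htend : Filter.Tendsto (fun n : ℕ => lam - 1/((n:ℝ)+1))
              Filter.atTop (nhds lam) := by
            have h2 := tendsto_one_div_add_atTop_nhds_zero_nat (𝕜 := ℝ)
            have := Filter.Tendsto.sub (tendsto_const_nhds (x := lam)) h2
            simpa using this
          exact le_of_tendsto' htend fun n => (hδ0mem n).2
        linarith
      -- both δm and δ0 are eigenvectors for lam
      have heigm : Mstar.mulVec δm = lam • δm := eig_of_max Mstar hHerm hpos hubQ hδm hQδm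
      have heig0 : Mstar.mulVec δ0 = lam • δ0 := eig_of_max Mstar hHerm hpos hubQ hδ0 hQMs0
      have hfr := hsimple Mstar hMstar hminle
      have hmemm : (δm : Fin d → ℝ) ∈ Module.End.eigenspace (Matrix.toLin' Mstar) lam := by
        exact Module.End.mem_eigenspace_iff.mpr heigm
      have hmem0 : (δ0 : Fin d → ℝ) ∈ Module.End.eigenspace (Matrix.toLin' Mstar) lam := by
        exact Module.End.mem_eigenspace_iff.mpr heig0
      have hδmne : (δm : Fin d → ℝ) ≠ 0 := by
        intro h
        have : Q Mstar δm = 0 := by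
          have : δm = (0 : EuclideanSpace ℝ (Fin d)) := WithLp.ofLp_injective 2 h
          rw [this, Q_zero]
        rw [hQδm] at this
        linarith
      obtain ⟨c, hc⟩ := smul_of_finrank_one hfr hmemm hmem0 hδmne
      have hQ0s : Q Mstar δ0 = c ^ 2 * Q Mstar δm := Q_of_eq_smul hc
      have hc2 : c ^ 2 = 1 := by
        rw [hQMs0, hQδm] at hQ0s
        have h : c ^ 2 * lam = 1 * lam := by rw [one_mul]; linarith
        exact mul_right_cancel₀ hpos.ne' h
      have hQM0' : Q M δ0 = Q M δm := by
        rw [Q_of_eq_smul (A := M) hc, hc2, one_mul]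
      rw [hQM0'] at hQM0
      linarith
  · -- lam = 0 case: δstar = 0 works
    have hlamz : lam = 0 := le_antisymm (not_lt.mp hpos) hlam0
    refine ⟨Mstar, hMstar, 0, by simp, ?_, ?_⟩
    · intro δ hδ
      have h1 : Q Mstar δ ≤ lam := hub δ hδ
      have h2 : Q Mstar (0 : EuclideanSpace ℝ (Fin d)) = 0 := Q_zero _
      show Q Mstar δ ≤ Q Mstar (0 : EuclideanSpace ℝ (Fin d))
      rw [h2]
      linarith
    · intro M hM
      show Q Mstar (0 : EuclideanSpace ℝ (Fin d)) ≤ Q M (0 : EuclideanSpace ℝ (Fin d))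
      rw [Q_zero, Q_zero]
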